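/- Fix integers r ≥ 1 and s ≥ 1 and set N = 2r + 2s. Let η be the N×N real symmetric matrix with ηᵢⱼ = 1 when i + j = N + 1 and (i ≤ r or i ≥ r + 2s + 1), ηᵢᵢ = 1 when r + 1 ≤ i ≤ r + 2s, and all other entries 0 (this η has signature (r + 2s, r)). Then the set B = {X ∈ Mat(N×N, ℝ) : Xᵢⱼ = 0 whenever i > j, and Xᵀ·η + η·X = 0} of upper triangular matrices in so(r, r+2s) is a Lie subalgebra of gl(N, ℝ) (closed under the matrix commutator), it is a solvable Lie algebra, and its dimension as a real vector space equals r·(r + 2s), which is the dimension of the symmetric space SO(r, r+2s)/(SO(r)×SO(r+2s)). -/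

import Mathlib

open Matrix

attribute [local instance 100] LieRing.ofAssociativeRing

/-- The `N×N` symmetric matrix `η` (with `N = 2r+2s`) of signature `(r+2s, r)`:
`ηᵢⱼ = 1` when `i + j = N + 1` and (`i ≤ r` or `i ≥ r + 2s + 1`); `ηᵢᵢ = 1` when
`r + 1 ≤ i ≤ r + 2s`; all other entries `0` (indices written `1`-based). -/
def etaRS (r s : ℕ) : Matrix (Fin (2 * r + 2 * s)) (Fin (2 * r + 2 * s)) ℝ :=
  Matrix.of fun i j =>
    if i.val + j.val + 1 = 2 * r + 2 * s ∧ (i.val < r ∨ r + 2 * s ≤ i.val) then 1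
    else if i = j ∧ r ≤ i.val ∧ i.val < r + 2 * s then 1
    else 0

namespace Stmt6Aux

/-! ### Depth-`d` vanishing predicate and solvability of triangular subalgebras -/

def Pd {n : ℕ} (d : ℕ) (X : Matrix (Fin n) (Fin n) ℝ) : Prop :=
  ∀ i j : Fin n, j.val < i.val + d → X i j = 0

lemma Pd.mono {n d e : ℕ} (h : e ≤ d) {X : Matrix (Fin n) (Fin n) ℝ} (hX : Pd d X) : Pd e X :=
  fun i j hij => hX i j (by omega)

lemma Pd.mul {n d e : ℕ} {X Y : Matrix (Fin n) (Fin n) ℝ} (hX : Pd d X) (hY : Pd e Y) :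
    Pd (d + e) (X * Y) := by
  intro i j hij
  rw [Matrix.mul_apply]
  apply Finset.sum_eq_zero
  intro k _
  by_cases hk : k.val < i.val + d
  · rw [hX i k hk, zero_mul]
  · rw [hY k j (by omega), mul_zero]

lemma Pd.sub {n d : ℕ} {X Y : Matrix (Fin n) (Fin n) ℝ} (hX : Pd d X) (hY : Pd d Y) :
    Pd d (X - Y) := fun i j h => by
  rw [Matrix.sub_apply, hX i j h, hY i j h, sub_zero]

lemma Pd.add {n d : ℕ} {X Y : Matrix (Fin n) (Fin n) ℝ} (hX : Pd d X) (hY : Pd d Y) :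
    Pd d (X + Y) := fun i j h => by
  rw [Matrix.add_apply, hX i j h, hY i j h, add_zero]

lemma Pd.zero {n d : ℕ} : Pd d (0 : Matrix (Fin n) (Fin n) ℝ) := fun _ _ _ => rfl

lemma Pd.smul {n d : ℕ} (c : ℝ) {X : Matrix (Fin n) (Fin n) ℝ} (hX : Pd d X) :
    Pd d (c • X) := fun i j h => by
  rw [Matrix.smul_apply, hX i j h, smul_zero]

lemma Pd.lie0 {n : ℕ} {X Y : Matrix (Fin n) (Fin n) ℝ} (hX : Pd 0 X) (hY : Pd 0 Y) :
    Pd 1 (X * Y - Y * X) := by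
  intro i j hij
  rw [Matrix.sub_apply, Matrix.mul_apply, Matrix.mul_apply, ← Finset.sum_sub_distrib]
  apply Finset.sum_eq_zero
  intro k _
  rcases lt_or_ge k.val i.val with hk | hk
  · rw [hX i k (by omega), hY i k (by omega), zero_mul, zero_mul, sub_zero]
  · rcases lt_or_ge j.val k.val with hk2 | hk2
    · rw [hX k j (by omega), hY k j (by omega), mul_zero, mul_zero, sub_zero]
    · have hki : k = i := Fin.ext (by omega)
      have hji : j = i := Fin.ext (by omega)
      subst hki; subst hji
      ring

lemma Pd.lie_succ {n k : ℕ} {X Y : Matrix (Fin n) (Fin n) ℝ} (hX : Pd k X) (hY : Pd k Y) :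
    Pd (k + 1) (X * Y - Y * X) := by
  cases k with
  | zero => exact Pd.lie0 hX hY
  | succ k => exact ((hX.mul hY).mono (by omega)).sub ((hY.mul hX).mono (by omega))

lemma solvable_of_triangular {n : ℕ} (B : LieSubalgebra ℝ (Matrix (Fin n) (Fin n) ℝ))
    (hB : ∀ X ∈ B, ∀ i j : Fin n, j.val < i.val → X i j = 0) :
    LieAlgebra.IsSolvable B := by
  let K : ℕ → LieIdeal ℝ B := fun k =>
    { carrier := {x | Pd k (x : Matrix (Fin n) (Fin n) ℝ)}
      add_mem' := fun {x y} hx hy => by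
        simpa using Pd.add hx hy
      zero_mem' := by simpa using (Pd.zero (n := n) (d := k))
      smul_mem' := fun c {x} hx => by
        simpa using Pd.smul c hx
      lie_mem := fun {x m} hm => by
        have hx : Pd 0 (x : Matrix (Fin n) (Fin n) ℝ) := fun i j h =>
          hB _ x.2 i j (by omega)
        have : Pd k ((x : Matrix (Fin n) (Fin n) ℝ) * (m : Matrix (Fin n) (Fin n) ℝ)
            - (m : Matrix (Fin n) (Fin n) ℝ) * (x : Matrix (Fin n) (Fin n) ℝ)) := by
          have h1 : Pd (0 + k) ((x : Matrix (Fin n) (Fin n) ℝ) *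
            (m : Matrix (Fin n) (Fin n) ℝ)) := Pd.mul hx hm
          have h2 : Pd (k + 0) ((m : Matrix (Fin n) (Fin n) ℝ) *
            (x : Matrix (Fin n) (Fin n) ℝ)) := Pd.mul hm hx
          rw [Nat.zero_add] at h1; rw [Nat.add_zero] at h2
          exact h1.sub h2
        simpa [Ring.lie_def] using this }
  have hK : ∀ k, ∀ x y : B, x ∈ K k → y ∈ K k → ⁅x, y⁆ ∈ K (k + 1) := by
    intro k x y hx hy
    have : Pd (k + 1) ((x : Matrix (Fin n) (Fin n) ℝ) * (y : Matrix (Fin n) (Fin n) ℝ)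
        - (y : Matrix (Fin n) (Fin n) ℝ) * (x : Matrix (Fin n) (Fin n) ℝ)) :=
      Pd.lie_succ hx hy
    simpa [K, Ring.lie_def] using this
  have hd : ∀ k, LieAlgebra.derivedSeries ℝ B k ≤ K k := by
    intro k
    induction k with
    | zero =>
      intro x _
      exact fun i j h => hB _ x.2 i j (by omega)
    | succ k ih =>
      rw [LieAlgebra.derivedSeries_def, LieAlgebra.derivedSeriesOfIdeal_succ,
        ← LieAlgebra.derivedSeries_def]
      refine le_trans (LieSubmodule.mono_lie ih ih) ?_
      rw [LieSubmodule.lieIdeal_oper_eq_span, LieSubmodule.lieSpan_le]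
      rintro m ⟨⟨x, hx⟩, ⟨y, hy⟩, rfl⟩
      exact hK k x y hx hy
  rw [LieAlgebra.isSolvable_iff ℝ]
  refine ⟨n, ?_⟩
  rw [eq_bot_iff]
  intro x hx
  have hx' := hd n hx
  have : (x : Matrix (Fin n) (Fin n) ℝ) = 0 := by
    ext i j
    exact hx' i j (by omega)
  simpa [LieSubmodule.mem_bot] using Subtype.ext this

/-! ### The involution `sig` and the structure of `etaRS` -/

def sig (r s : ℕ) (i : Fin (2 * r + 2 * s)) : Fin (2 * r + 2 * s) :=
  ⟨if i.val < r ∨ r + 2 * s ≤ i.val then 2 * r + 2 * s - 1 - i.val else i.val, by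
    have := i.isLt; split_ifs <;> omega⟩

lemma sig_sig {r s : ℕ} (i : Fin (2 * r + 2 * s)) : sig r s (sig r s i) = i := by
  have := i.isLt
  apply Fin.ext
  simp only [sig]
  split_ifs <;> omega

lemma eta_apply {r s : ℕ} (i j : Fin (2 * r + 2 * s)) :
    etaRS r s i j = if j = sig r s i then 1 else 0 := by
  have hi := i.isLt
  have hj := j.isLt
  simp only [etaRS, Matrix.of_apply, sig, Fin.ext_iff]
  split_ifs <;> first | rfl | omega

lemma eta_apply' {r s : ℕ} (i j : Fin (2 * r + 2 * s)) :
    etaRS r s i j = if i = sig r s j then 1 else 0 := by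
  rw [eta_apply]
  congr 1
  simp only [eq_iff_iff]
  constructor
  · rintro rfl; rw [sig_sig]
  · rintro rfl; rw [sig_sig]

lemma eta_mul_apply {r s : ℕ} (X : Matrix (Fin (2 * r + 2 * s)) (Fin (2 * r + 2 * s)) ℝ)
    (i j : Fin (2 * r + 2 * s)) : (etaRS r s * X) i j = X (sig r s i) j := by
  rw [Matrix.mul_apply]
  have : ∀ k, etaRS r s i k * X k j = if k = sig r s i then X k j else 0 := by
    intro k; rw [eta_apply]; split_ifs <;> simp
  simp only [this, Finset.sum_ite_eq' Finset.univ (sig r s i) (fun k => X k j),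
    Finset.mem_univ, if_true]

lemma mul_eta_apply {r s : ℕ} (X : Matrix (Fin (2 * r + 2 * s)) (Fin (2 * r + 2 * s)) ℝ)
    (i j : Fin (2 * r + 2 * s)) : (Xᵀ * etaRS r s) i j = X (sig r s j) i := by
  rw [Matrix.mul_apply]
  have : ∀ k, Xᵀ i k * etaRS r s k j = if k = sig r s j then X k i else 0 := by
    intro k; rw [eta_apply', Matrix.transpose_apply]; split_ifs <;> simp
  simp only [this, Finset.sum_ite_eq' Finset.univ (sig r s j) (fun k => X k i),
    Finset.mem_univ, if_true]

lemma so_iff {r s : ℕ} (X : Matrix (Fin (2 * r + 2 * s)) (Fin (2 * r + 2 * s)) ℝ) :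
    Xᵀ * etaRS r s + etaRS r s * X = 0 ↔
      ∀ a b, X a b = -X (sig r s b) (sig r s a) := by
  constructor
  · intro h a b
    have : (Xᵀ * etaRS r s + etaRS r s * X) b (sig r s a) = (0 : Matrix _ _ ℝ) b (sig r s a) := by
      rw [h]
    rw [Matrix.add_apply, mul_eta_apply, eta_mul_apply, sig_sig, Matrix.zero_apply] at this
    linarith
  · intro h
    ext i j
    rw [Matrix.add_apply, mul_eta_apply, eta_mul_apply, Matrix.zero_apply]
    have := h (sig r s j) i
    rw [sig_sig] at this
    linarith

/-! ### The parametrization `phi` -/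

def phiFun (r s : ℕ) (Y : Matrix (Fin r) (Fin (r + 2 * s)) ℝ) :
    Matrix (Fin (2 * r + 2 * s)) (Fin (2 * r + 2 * s)) ℝ :=
  Matrix.of fun i j =>
    if h1 : i.val < r ∧ i.val ≤ j.val ∧ i.val + j.val + 1 < 2 * r + 2 * s then
      if h2 : j.val < r + 2 * s then Y ⟨i.val, h1.1⟩ ⟨j.val, h2⟩
      else Y ⟨2 * r + 2 * s - 1 - j.val, by have := j.isLt; omega⟩ ⟨i.val, by omega⟩
    else if h3 : r + 2 * s ≤ j.val ∧ i.val ≤ j.val ∧ 2 * r + 2 * s ≤ i.val + j.val then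
      if h4 : i.val < r then
        -Y ⟨i.val, h4⟩ ⟨2 * r + 2 * s - 1 - j.val, by have := j.isLt; omega⟩
      else if h5 : i.val < r + 2 * s then
        -Y ⟨2 * r + 2 * s - 1 - j.val, by have := j.isLt; omega⟩ ⟨i.val, h5⟩
      else
        -Y ⟨2 * r + 2 * s - 1 - j.val, by have := j.isLt; omega⟩
          ⟨2 * r + 2 * s - 1 - i.val, by have := i.isLt; omega⟩
    else 0

lemma phiFun_tri (r s : ℕ) (Y : Matrix (Fin r) (Fin (r + 2 * s)) ℝ)
    (i j : Fin (2 * r + 2 * s)) (h : j < i) : phiFun r s Y i j = 0 := by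
  have h' : j.val < i.val := h
  simp only [phiFun, Matrix.of_apply]
  rw [dif_neg (by omega), dif_neg (by omega)]

set_option maxHeartbeats 1000000 in
lemma phiFun_rel (r s : ℕ) (Y : Matrix (Fin r) (Fin (r + 2 * s)) ℝ)
    (a b : Fin (2 * r + 2 * s)) :
    phiFun r s Y a b = -phiFun r s Y (sig r s b) (sig r s a) := by
  have ha := a.isLt
  have hb := b.isLt
  have hsig : ∀ i : Fin (2 * r + 2 * s), (sig r s i).val =
      if i.val < r ∨ r + 2 * s ≤ i.val then 2 * r + 2 * s - 1 - i.val else i.val := fun _ => rfl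
  have hsa := hsig a
  have hsb := hsig b
  rcases lt_or_ge a.val r with hA | hA
  case' inl => rw [if_pos (Or.inl hA)] at hsa
  case' inr =>
    rcases lt_or_ge a.val (r + 2 * s) with hA2 | hA2
    case' inl => rw [if_neg (by omega)] at hsa
    case' inr => rw [if_pos (Or.inr hA2)] at hsa
  all_goals
    rcases lt_or_ge b.val r with hB | hB
    case' inl => rw [if_pos (Or.inl hB)] at hsb
    case' inr =>
      rcases lt_or_ge b.val (r + 2 * s) with hB2 | hB2
      case' inl => rw [if_neg (by omega)] at hsb
      case' inr => rw [if_pos (Or.inr hB2)] at hsb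
  all_goals
    simp only [phiFun, Matrix.of_apply]
    simp only [hsa, hsb]
    split_ifs <;>
      (try simp only [neg_neg, neg_zero]) <;>
      first
        | rfl
        | (exact absurd rfl (by omega))
        | (congr <;> omega)

def phi (r s : ℕ) : Matrix (Fin r) (Fin (r + 2 * s)) ℝ →ₗ[ℝ]
    Matrix (Fin (2 * r + 2 * s)) (Fin (2 * r + 2 * s)) ℝ where
  toFun := phiFun r s
  map_add' := by
    intro Y Z
    ext i j
    simp only [phiFun, Matrix.of_apply, Matrix.add_apply]
    split_ifs <;> simp [Matrix.add_apply] <;> ring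
  map_smul' := by
    intro c Y
    ext i j
    simp only [phiFun, Matrix.of_apply, Matrix.smul_apply, RingHom.id_apply]
    split_ifs <;> simp [Matrix.smul_apply]

lemma phi_inj (r s : ℕ) : Function.Injective (phi r s) := by
  rw [← LinearMap.ker_eq_bot, eq_bot_iff]
  intro Y hY
  have hY'0 : phiFun r s Y = 0 := hY
  have hY' : ∀ i j, phiFun r s Y i j = 0 := fun i j => by rw [hY'0]; rfl
  simp only [Submodule.mem_bot]
  ext a b
  have ha := a.isLt
  have hb := b.isLt
  rcases lt_or_ge b.val a.val with hab | hab
  · have := hY' ⟨b.val, by omega⟩ ⟨2 * r + 2 * s - 1 - a.val, by omega⟩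
    simp only [phiFun, Matrix.of_apply] at this
    rw [dif_pos ⟨by omega, by omega, by omega⟩, dif_neg (by omega)] at this
    rw [show Y a b = 0 from by
      convert this using 2 <;> (apply Fin.ext; simp; omega)]
    simp
  · have := hY' ⟨a.val, by omega⟩ ⟨b.val, by omega⟩
    simp only [phiFun, Matrix.of_apply] at this
    rw [dif_pos ⟨by omega, by omega, by omega⟩, dif_pos (by omega)] at this
    rw [show Y a b = 0 from by
      convert this using 2 <;> (apply Fin.ext; simp)]
    simp

lemma phiFun_surj (r s : ℕ) (X : Matrix (Fin (2 * r + 2 * s)) (Fin (2 * r + 2 * s)) ℝ)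
    (htri : ∀ i j, j < i → X i j = 0)
    (hrel : ∀ a b, X a b = -X (sig r s b) (sig r s a)) :
    ∃ Y, phiFun r s Y = X := by
  refine ⟨Matrix.of fun a b =>
    if h : b.val < a.val then
      X ⟨b.val, by have := b.isLt; omega⟩ ⟨2 * r + 2 * s - 1 - a.val, by have := a.isLt; omega⟩
    else X ⟨a.val, by have := a.isLt; omega⟩ ⟨b.val, by have := b.isLt; omega⟩, ?_⟩
  ext i j
  have hi := i.isLt
  have hj := j.isLt
  simp only [phiFun, Matrix.of_apply]
  split_ifs
  all_goals
    first
      | (exfalso; omega)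
      | (congr <;> (apply Fin.ext; simp; all_goals omega))
      | (apply congrArg₂ X (Fin.ext (by simp)) (Fin.ext (by simp; omega)))
      | (apply congrArg₂ X (Fin.ext (by simp)) (Fin.ext (by simp)))
      | (have e := hrel i j
         have e1 : sig r s j = ⟨2 * r + 2 * s - 1 - j.val, by omega⟩ := by
           apply Fin.ext; simp only [sig]; rw [if_pos (by omega)]
         rw [e1] at e
         first
           | (rw [show sig r s i = ⟨2 * r + 2 * s - 1 - i.val, by omega⟩ from by
                apply Fin.ext; simp only [sig]; rw [if_pos (by omega)]] at e
              exact e.symm)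
           | (rw [show sig r s i = i from by
                apply Fin.ext; simp only [sig]; rw [if_neg (by omega)]] at e
              exact e.symm))
      | (rcases lt_or_ge j.val i.val with hij | hij
         · exact (htri i j hij).symm
         · have key : (r ≤ i.val ∧ j.val < r + 2 * s) ∨
               (i.val < r ∧ i.val + j.val + 1 = 2 * r + 2 * s) := by omega
           rcases key with ⟨k1, k2⟩ | ⟨k1, k2⟩
           · have e1 : sig r s j = j := by
               apply Fin.ext; simp only [sig]; rw [if_neg (by omega)]
             have e2 : sig r s i = i := by
               apply Fin.ext; simp only [sig]; rw [if_neg (by omega)]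
             have e := hrel i j
             rw [e1, e2] at e
             rcases eq_or_lt_of_le hij with he | hlt
             · have hij' : i = j := Fin.ext he
               subst hij'
               linarith
             · rw [htri j i hlt, neg_zero] at e
               exact e.symm
           · have e1 : sig r s j = i := by
               apply Fin.ext; simp only [sig]; rw [if_pos (by omega)]; omega
             have e2 : sig r s i = j := by
               apply Fin.ext; simp only [sig]; rw [if_pos (by omega)]; omega
             have e := hrel i j
             rw [e1, e2] at e
             linarith)

end Stmt6Aux

open Stmt6Aux in
/-- **The solvable Lie algebra of the symmetric space `SO(r,r+2s)/(SO(r)×SO(r+2s))`.**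
The set of upper triangular matrices `X` with `Xᵀ·η + η·X = 0` is a Lie subalgebra of
`gl(2r+2s, ℝ)`, it is solvable, and its dimension is `r·(r+2s)`, the dimension of the
symmetric space. -/
theorem stmt_6 (r s : ℕ) (hr : 1 ≤ r) (hs : 1 ≤ s) :
    ∃ B : LieSubalgebra ℝ (Matrix (Fin (2 * r + 2 * s)) (Fin (2 * r + 2 * s)) ℝ),
      (B : Set (Matrix (Fin (2 * r + 2 * s)) (Fin (2 * r + 2 * s)) ℝ)) =
        {X | (∀ i j, j < i → X i j = 0) ∧ Xᵀ * etaRS r s + etaRS r s * X = 0} ∧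
      LieAlgebra.IsSolvable B ∧
      Module.finrank ℝ B = r * (r + 2 * s) := by
  let B : LieSubalgebra ℝ (Matrix (Fin (2 * r + 2 * s)) (Fin (2 * r + 2 * s)) ℝ) :=
  { carrier := {X | (∀ i j, j < i → X i j = 0) ∧ Xᵀ * etaRS r s + etaRS r s * X = 0}
    add_mem' := by
      rintro X Y ⟨hX1, hX2⟩ ⟨hY1, hY2⟩
      refine ⟨fun i j h => by rw [Matrix.add_apply, hX1 i j h, hY1 i j h, add_zero], ?_⟩
      rw [Matrix.transpose_add, Matrix.add_mul, Matrix.mul_add, add_add_add_comm, hX2, hY2,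
        add_zero]
    zero_mem' := by
      refine ⟨fun i j h => rfl, ?_⟩
      simp
    smul_mem' := by
      rintro c X ⟨hX1, hX2⟩
      refine ⟨fun i j h => by rw [Matrix.smul_apply, hX1 i j h, smul_zero], ?_⟩
      rw [Matrix.transpose_smul, smul_mul_assoc, mul_smul_comm, ← smul_add, hX2, smul_zero]
    lie_mem' := by
      rintro X Y ⟨hX1, hX2⟩ ⟨hY1, hY2⟩
      have hX0 : Pd 0 X := fun i j h => hX1 i j (by omega)
      have hY0 : Pd 0 Y := fun i j h => hY1 i j (by omega)
      refine ⟨fun i j h => ?_, ?_⟩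
      · have := ((hX0.mul hY0).sub (hY0.mul hX0)) i j (by omega)
        simpa [Ring.lie_def] using this
      · have hX' : Xᵀ * etaRS r s = -(etaRS r s * X) := eq_neg_of_add_eq_zero_left hX2
        have hY' : Yᵀ * etaRS r s = -(etaRS r s * Y) := eq_neg_of_add_eq_zero_left hY2
        rw [Ring.lie_def, Matrix.transpose_sub, Matrix.transpose_mul, Matrix.transpose_mul,
          Matrix.sub_mul, Matrix.mul_sub]
        rw [Matrix.mul_assoc Yᵀ Xᵀ (etaRS r s), hX', Matrix.mul_assoc Xᵀ Yᵀ (etaRS r s), hY']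
        rw [mul_neg, mul_neg, ← Matrix.mul_assoc Yᵀ (etaRS r s) X, hY',
          ← Matrix.mul_assoc Xᵀ (etaRS r s) Y, hX']
        simp only [neg_mul, neg_neg]
        rw [← Matrix.mul_assoc (etaRS r s) X Y, ← Matrix.mul_assoc (etaRS r s) Y X]
        abel }
  refine ⟨B, rfl, solvable_of_triangular _ (fun X hX i j h => hX.1 i j h), ?_⟩
  have hsub : B.toSubmodule = LinearMap.range (phi r s) := by
    apply le_antisymm
    · rintro X ⟨h1, h2⟩
      obtain ⟨Y, hY⟩ := phiFun_surj r s X h1 ((so_iff X).1 h2)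
      exact ⟨Y, hY⟩
    · rintro X ⟨Y, rfl⟩
      exact ⟨phiFun_tri r s Y, (so_iff _).2 (phiFun_rel r s Y)⟩
  have h1 : Module.finrank ℝ B = Module.finrank ℝ B.toSubmodule := rfl
  rw [h1, hsub, LinearMap.finrank_range_of_inj (phi_inj r s)]
  rw [Module.finrank_matrix]
  simp [Module.finrank_self, Fintype.card_fin]
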